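/- Let A be a symmetric densely defined operator on a Hilbert space H with domain D(A), let H₀ ⊆ D(A) be a finite-dimensional subspace, P the orthogonal projection onto H₀, and define à = (I−P)A(I−P) on H₀^⊥. Then à is essentially self-adjoint if and only if A is essentially self-adjoint. -/

import Mathlib

open Complex Filter Topology

local notation "⟪" x ", " y "⟫" => @inner ℂ _ _ x y

/-- A densely defined symmetric operator is essentially self-adjoint iff the ranges
of `A ± i` are dense. We use this as the definition. -/
def EssSelfAdjoint {E : Type*} [NormedAddCommGroup E] [InnerProductSpace ℂ E]
    (A : E →ₗ.[ℂ] E) : Prop :=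
  Dense (Set.range fun x : A.domain => A x + Complex.I • (x : E)) ∧
  Dense (Set.range fun x : A.domain => A x - Complex.I • (x : E))


lemma core_lemma {K : Type*} [NormedAddCommGroup K] [InnerProductSpace ℂ K] [CompleteSpace K]
    (T : K →ₗ.[ℂ] K)
    (hsym : ∀ x y : T.domain, ⟪T x, ((y : K))⟫ = ⟪((x : K)), T y⟫)
    (e : ℂ) (he : e = Complex.I ∨ e = -Complex.I)
    (hd1 : Dense (Set.range fun x : T.domain => T x + e • (x : K)))
    (hd2 : Dense (Set.range fun x : T.domain => T x - e • (x : K)))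
    (w h : K) (hw : ∀ x : T.domain, ⟪T x + e • (x : K), w⟫ = ⟪((x : K)), h⟫) :
    (starRingEnd ℂ) ⟪h, w⟫ + e * (‖w‖ : ℂ) ^ 2 = ⟪h, w⟫ - e * (‖w‖ : ℂ) ^ 2 := by
  have hce : (starRingEnd ℂ) e = -e := by rcases he with rfl | rfl <;> simp
  have hnorme : ‖e‖ = 1 := by rcases he with rfl | rfl <;> simp
  -- real inner products
  have hreal : ∀ u : T.domain, (starRingEnd ℂ) ⟪T u, ((u : K))⟫ = ⟪T u, ((u : K))⟫ := by
    intro u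
    rw [inner_conj_symm, hsym]
  -- norm estimate
  have hest : ∀ u : T.domain, ‖(u : K)‖ ≤ ‖T u + e • (u : K)‖ ∧ ‖T u‖ ≤ ‖T u + e • (u : K)‖ := by
    intro u
    have h1 : ‖T u + e • (u : K)‖ ^ 2 = ‖T u‖ ^ 2 + ‖(u : K)‖ ^ 2 := by
      have hre : RCLike.re ⟪T u, e • (u : K)⟫ = 0 := by
        rw [inner_smul_right]
        have hz := hreal u
        set z := ⟪T u, ((u : K))⟫ with hzdef
        have hzim : z.im = 0 := by
          have := congrArg Complex.im hz
          simp at this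
          linarith
        rcases he with rfl | rfl <;>
          simp [Complex.mul_re, hzim]
      rw [norm_add_sq (𝕜 := ℂ), hre, norm_smul, hnorme]
      ring
    constructor
    · nlinarith [norm_nonneg (T u + e • (u : K)), norm_nonneg (T u), norm_nonneg ((u : K))]
    · nlinarith [norm_nonneg (T u + e • (u : K)), norm_nonneg (T u), norm_nonneg ((u : K))]
  -- the sequence
  set c : K := h + (2 * e) • w with hc
  obtain ⟨g, hg_mem, hg_lim⟩ := mem_closure_iff_seq_limit.mp (hd1 c)
  choose f hf using hg_mem
  -- difference estimates
  have hdiff : ∀ p q : T.domain,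
      (T p + e • (p : K)) - (T q + e • (q : K)) = T (p - q) + e • ((p - q : T.domain) : K) := by
    intro p q
    rw [T.map_sub]
    push_cast
    rw [smul_sub]
    abel
  have hgc : CauchySeq g := hg_lim.cauchySeq
  have hfc : CauchySeq (fun n => ((f n : K))) := by
    rw [Metric.cauchySeq_iff] at hgc ⊢
    intro ε hε
    obtain ⟨N, hN⟩ := hgc ε hε
    refine ⟨N, fun m hm n hn => ?_⟩
    have := hN m hm n hn
    rw [dist_eq_norm] at this ⊢
    refine lt_of_le_of_lt ?_ this
    rw [← hf m, ← hf n, hdiff]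
    simpa using (hest (f m - f n)).1
  have hTfc : CauchySeq (fun n => T (f n)) := by
    rw [Metric.cauchySeq_iff] at hgc ⊢
    intro ε hε
    obtain ⟨N, hN⟩ := hgc ε hε
    refine ⟨N, fun m hm n hn => ?_⟩
    have := hN m hm n hn
    rw [dist_eq_norm] at this ⊢
    refine lt_of_le_of_lt ?_ this
    rw [← hf m, ← hf n, hdiff]
    simpa [T.map_sub] using (hest (f m - f n)).2
  obtain ⟨x, hx⟩ := cauchySeq_tendsto_of_complete hfc
  obtain ⟨y, hy⟩ := cauchySeq_tendsto_of_complete hTfc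
  have hyx : y + e • x = c := by
    have h1 : Tendsto (fun n => T (f n) + e • ((f n : K))) atTop (𝓝 (y + e • x)) :=
      hy.add (hx.const_smul e)
    have h2 : Tendsto (fun n => T (f n) + e • ((f n : K))) atTop (𝓝 c) := by
      have : (fun n => T (f n) + e • ((f n : K))) = g := funext hf
      rw [this]; exact hg_lim
    exact tendsto_nhds_unique h1 h2
  -- ⟪Tz - e z, w⟫ = ⟪z, c⟫
  have hzc : ∀ z : T.domain, ⟪T z - e • ((z : K)), w⟫ = ⟪((z : K)), c⟫ := by
    intro z
    have h1 := hw z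
    rw [inner_add_left, inner_smul_left, hce] at h1
    rw [inner_sub_left, inner_smul_left, hce, hc, inner_add_right, inner_smul_right]
    linear_combination h1
  have hzx : ∀ z : T.domain, ⟪T z - e • ((z : K)), x⟫ = ⟪((z : K)), c⟫ := by
    intro z
    have h1 : Tendsto (fun n => ⟪T z - e • ((z : K)), ((f n : K))⟫) atTop
        (𝓝 ⟪T z - e • ((z : K)), x⟫) := tendsto_const_nhds.inner hx
    have h2 : Tendsto (fun n => ⟪((z : K)), g n⟫) atTop (𝓝 ⟪((z : K)), c⟫) :=
      tendsto_const_nhds.inner hg_lim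
    have heq : (fun n => ⟪T z - e • ((z : K)), ((f n : K))⟫)
        = fun n => ⟪((z : K)), g n⟫ := by
      funext n
      rw [← hf n]
      simp only
      rw [inner_sub_left, inner_smul_left, hce, inner_add_right, inner_smul_right,
        hsym z (f n)]
      ring
    rw [heq] at h1
    exact tendsto_nhds_unique h1 h2
  have hwx : w = x := by
    have hz : ∀ z : T.domain, ⟪T z - e • ((z : K)), w - x⟫ = 0 := by
      intro z
      rw [inner_sub_right, hzc, hzx, sub_self]
    have hfun : (fun v : K => ⟪v, w - x⟫) = 0 :=
      (continuous_id.inner continuous_const).ext_on hd2 continuous_const (by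
        rintro v ⟨z, rfl⟩
        exact hz z)
    have h0 := congrFun hfun (w - x)
    rw [Pi.zero_apply, inner_self_eq_zero] at h0
    exact sub_eq_zero.mp h0
  -- reality of ⟪y, w⟫
  have hTfw : ∀ n, ⟪T (f n), w⟫ = ⟪((f n : K) : K), y⟫ := by
    intro n
    have h1 : Tendsto (fun m => ⟪T (f n), ((f m : K))⟫) atTop (𝓝 ⟪T (f n), x⟫) :=
      tendsto_const_nhds.inner hx
    have h2 : Tendsto (fun m => ⟪((f n : K) : K), T (f m)⟫) atTop
        (𝓝 ⟪((f n : K) : K), y⟫) := tendsto_const_nhds.inner hy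
    have heq : (fun m => ⟪T (f n), ((f m : K))⟫)
        = fun m => ⟪((f n : K) : K), T (f m)⟫ := by
      funext m; exact hsym (f n) (f m)
    rw [heq] at h1
    rw [hwx]
    exact tendsto_nhds_unique h1 h2
  have hyw : (starRingEnd ℂ) ⟪y, w⟫ = ⟪y, w⟫ := by
    have h1 : Tendsto (fun n => ⟪T (f n), w⟫) atTop (𝓝 ⟪y, w⟫) :=
      hy.inner tendsto_const_nhds
    have h2 : Tendsto (fun n => ⟪((f n : K) : K), y⟫) atTop (𝓝 ⟪x, y⟫) :=
      hx.inner tendsto_const_nhds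
    have heq : (fun n => ⟪T (f n), w⟫) = fun n => ⟪((f n : K) : K), y⟫ := funext hTfw
    rw [heq] at h1
    have h3 : ⟪y, w⟫ = ⟪x, y⟫ := tendsto_nhds_unique h1 h2
    rw [← hwx] at h3
    rw [h3, inner_conj_symm]
    exact h3
  -- y = h + e • w
  have hy2 : y = h + e • w := by
    rw [← hwx] at hyx
    have h4 : y = h + (2 * e) • w - e • w := by
      rw [← hc, ← hyx]; abel
    rw [h4, two_mul, add_smul]; abel
  have hfin : ⟪y, w⟫ = ⟪h, w⟫ - e * (‖w‖ : ℂ) ^ 2 := by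
    rw [hy2, inner_add_left, inner_smul_left, hce, inner_self_eq_norm_sq_to_K]
    rw [show ((‖w‖ : ℂ) : ℂ) ^ 2 = ((‖w‖ ^ 2 : ℝ) : ℂ) by push_cast; ring]
    norm_num
    ring
  calc (starRingEnd ℂ) ⟪h, w⟫ + e * (‖w‖ : ℂ) ^ 2
      = (starRingEnd ℂ) (⟪h, w⟫ - e * (‖w‖ : ℂ) ^ 2) := by
        rw [map_sub, map_mul, hce, map_pow, Complex.conj_ofReal]; ring
    _ = (starRingEnd ℂ) ⟪y, w⟫ := by rw [hfin]
    _ = ⟪y, w⟫ := hyw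
    _ = ⟪h, w⟫ - e * (‖w‖ : ℂ) ^ 2 := hfin

lemma dense_range_of_inner {V : Type*} {K : Type*} [NormedAddCommGroup K]
    [InnerProductSpace ℂ K] [CompleteSpace K] [AddCommGroup V] [Module ℂ V]
    (L : V →ₗ[ℂ] K)
    (hz : ∀ w : K, (∀ x : V, ⟪L x, w⟫ = 0) → w = 0) :
    Dense (Set.range fun x : V => L x) := by
  have hrange : (Set.range fun x : V => L x) = (LinearMap.range L : Set K) := by
    ext v; simp [LinearMap.mem_range]
  rw [hrange, Submodule.dense_iff_topologicalClosure_eq_top,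
    Submodule.topologicalClosure_eq_top_iff, Submodule.eq_bot_iff]
  intro w hw
  exact hz w fun x => (Submodule.mem_orthogonal _ w).mp hw (L x) ⟨x, rfl⟩

lemma dirB {H : Type*} [NormedAddCommGroup H] [InnerProductSpace ℂ H] [CompleteSpace H]
    (A : H →ₗ.[ℂ] H)
    (hsym : ∀ x y : A.domain, ⟪A x, ((y : H))⟫ = ⟪((x : H)), A y⟫)
    (H₀ : Submodule ℂ H) [FiniteDimensional ℂ H₀] (hsub : H₀ ≤ A.domain)
    (B : (H₀ᗮ : Submodule ℂ H) →ₗ.[ℂ] (H₀ᗮ : Submodule ℂ H))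
    (hdom : ∀ u : H₀ᗮ, u ∈ B.domain ↔ (u : H) ∈ A.domain)
    (hB : ∀ (u : B.domain) (hu : ((u : H₀ᗮ) : H) ∈ A.domain),
      ((B u : H₀ᗮ) : H) = A ⟨((u : H₀ᗮ) : H), hu⟩
        - (H₀.orthogonalProjectionOnto (A ⟨((u : H₀ᗮ) : H), hu⟩) : H))
    (e : ℂ) (he : e = Complex.I ∨ e = -Complex.I)
    (hA1 : Dense (Set.range fun x : A.domain => A x + e • (x : H)))
    (hA2 : Dense (Set.range fun x : A.domain => A x - e • (x : H)))
    (w : H₀ᗮ) (hw : ∀ u : B.domain, ⟪((B u : H₀ᗮ)) + e • ((u : B.domain) : H₀ᗮ), w⟫ = 0) :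
    w = 0 := by
  have hce : (starRingEnd ℂ) e = -e := by rcases he with rfl | rfl <;> simp
  set w' : H := (w : H) with hw'def
  have hw'mem : w' ∈ H₀ᗮ := w.2
  let L0 : H₀ →ₗ[ℂ] H := A.toFun.comp (Submodule.inclusion hsub)
  let S : H →L[ℂ] H := (LinearMap.toContinuousLinearMap L0).comp
    (H₀.orthogonalProjectionOnto : H →L[ℂ] H₀)
  let g : H := ContinuousLinearMap.adjoint S w'
  have hg : ∀ x : H, ⟪S x, w'⟫ = ⟪x, g⟫ := fun x =>
    (ContinuousLinearMap.adjoint_inner_right S x w').symm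
  have hkey : ∀ x : A.domain, ⟪A x + e • ((x : H)), w'⟫ = ⟪((x : H)), g⟫ := by
    intro x
    set p : H := (H₀.orthogonalProjectionOnto (x : H) : H) with hp
    have hpH₀ : p ∈ H₀ := (H₀.orthogonalProjectionOnto ((x : H))).2
    have hpA : p ∈ A.domain := hsub hpH₀
    have humem : (x : H) - p ∈ H₀ᗮ := Submodule.sub_starProjection_mem_orthogonal (K := H₀) (x : H)
    have huA : (x : H) - p ∈ A.domain := A.domain.sub_mem x.2 hpA
    have huB : (⟨(x : H) - p, humem⟩ : H₀ᗮ) ∈ B.domain := (hdom _).mpr huA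
    have h0 := hw ⟨⟨(x : H) - p, humem⟩, huB⟩
    rw [Submodule.coe_inner] at h0
    push_cast at h0
    rw [hB ⟨⟨(x : H) - p, humem⟩, huB⟩ huA] at h0
    rw [← hw'def] at h0
    have hpa0 : ∀ z : H, ⟪((H₀.orthogonalProjectionOnto z : H₀) : H), w'⟫ = 0 := fun z =>
      (Submodule.mem_orthogonal H₀ w').mp hw'mem _ (H₀.orthogonalProjectionOnto z).2
    have hp0 : ⟪p, w'⟫ = 0 := (Submodule.mem_orthogonal H₀ w').mp hw'mem p hpH₀
    have hsplit : A ⟨(x : H) - p, huA⟩ = A x - A ⟨p, hpA⟩ := by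
      rw [show (⟨(x : H) - p, huA⟩ : A.domain) = x - ⟨p, hpA⟩ from rfl, A.map_sub]
    have hg' : ⟪((x : H)), g⟫ = ⟪A ⟨p, hpA⟩, w'⟫ := by
      rw [← hg]
      congr 1
    rw [hg']
    rw [hsplit, smul_sub] at h0
    simp only [inner_sub_left, inner_add_left, inner_smul_left, hce] at h0 ⊢
    rw [hpa0, hp0] at h0
    linear_combination h0
  have hcore := core_lemma A hsym e he hA1 hA2 w' g hkey
  have hgw : ⟪g, w'⟫ = 0 := by
    have h1 : ⟪w', g⟫ = 0 := by
      rw [← hg w']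
      have hS0 : S w' = 0 := by
        have hP0 : H₀.orthogonalProjectionOnto w' = 0 :=
          Submodule.orthogonalProjectionOnto_apply_of_mem_orthogonal hw'mem
        show (LinearMap.toContinuousLinearMap L0) (H₀.orthogonalProjectionOnto w') = 0
        rw [hP0, map_zero]
      rw [hS0, inner_zero_left]
    rw [← inner_conj_symm, h1, map_zero]
  rw [hgw, map_zero] at hcore
  have he0 : e ≠ 0 := by rcases he with rfl | rfl <;> simp [Complex.I_ne_zero]
  have h3 : e * ((‖w'‖ : ℂ) ^ 2) * 2 = 0 := by linear_combination hcore
  have h4 : (‖w'‖ : ℂ) ^ 2 = 0 := by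
    rcases mul_eq_zero.mp h3 with h | h
    · rcases mul_eq_zero.mp h with h' | h'
      · exact absurd h' he0
      · exact h'
    · exact absurd h two_ne_zero
  have h5 : ‖w'‖ = 0 := by
    have : (‖w'‖ : ℂ) = 0 := pow_eq_zero_iff two_ne_zero |>.mp h4
    exact_mod_cast this
  have h6 : w' = 0 := norm_eq_zero.mp h5
  exact Submodule.coe_eq_zero.mp h6

set_option maxHeartbeats 1000000 in
lemma dirA {H : Type*} [NormedAddCommGroup H] [InnerProductSpace ℂ H] [CompleteSpace H]
    (A : H →ₗ.[ℂ] H)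
    (hsym : ∀ x y : A.domain, ⟪A x, ((y : H))⟫ = ⟪((x : H)), A y⟫)
    (H₀ : Submodule ℂ H) [FiniteDimensional ℂ H₀] (hsub : H₀ ≤ A.domain)
    (B : (H₀ᗮ : Submodule ℂ H) →ₗ.[ℂ] (H₀ᗮ : Submodule ℂ H))
    (hdom : ∀ u : H₀ᗮ, u ∈ B.domain ↔ (u : H) ∈ A.domain)
    (hB : ∀ (u : B.domain) (hu : ((u : H₀ᗮ) : H) ∈ A.domain),
      ((B u : H₀ᗮ) : H) = A ⟨((u : H₀ᗮ) : H), hu⟩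
        - (H₀.orthogonalProjectionOnto (A ⟨((u : H₀ᗮ) : H), hu⟩) : H))
    (e : ℂ) (he : e = Complex.I ∨ e = -Complex.I)
    (hB1 : Dense (Set.range fun u : B.domain => B u + e • ((u : B.domain) : (H₀ᗮ : Submodule ℂ H))))
    (hB2 : Dense (Set.range fun u : B.domain => B u - e • ((u : B.domain) : (H₀ᗮ : Submodule ℂ H))))
    (v : H) (hv : ∀ x : A.domain, ⟪A x + e • ((x : H)), v⟫ = 0) : v = 0 := by
  haveI : CompleteSpace (H₀ᗮ : Submodule ℂ H) :=
    (Submodule.isClosed_orthogonal H₀).completeSpace_coe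
  have hce : (starRingEnd ℂ) e = -e := by rcases he with rfl | rfl <;> simp
  have hzk : ∀ (z k : H), z ∈ H₀ → k ∈ H₀ᗮ → ⟪z, k⟫ = 0 := fun z k hz hk =>
    (Submodule.mem_orthogonal H₀ k).mp hk z hz
  have hkz : ∀ (k z : H), k ∈ H₀ᗮ → z ∈ H₀ → ⟪k, z⟫ = 0 := fun k z hk hz =>
    (Submodule.mem_orthogonal' H₀ k).mp hk z hz
  -- B is symmetric
  have hsymB : ∀ u u' : B.domain,
      ⟪B u, ((u' : B.domain) : (H₀ᗮ : Submodule ℂ H))⟫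
        = ⟪((u : B.domain) : (H₀ᗮ : Submodule ℂ H)), B u'⟫ := by
    intro u u'
    have huA : ((u : (H₀ᗮ : Submodule ℂ H)) : H) ∈ A.domain := (hdom _).mp u.2
    have huA' : ((u' : (H₀ᗮ : Submodule ℂ H)) : H) ∈ A.domain := (hdom _).mp u'.2
    rw [Submodule.coe_inner, Submodule.coe_inner, hB u huA, hB u' huA']
    have h1 : ⟪((H₀.orthogonalProjectionOnto (A ⟨_, huA⟩) : H₀) : H),
        ((u' : (H₀ᗮ : Submodule ℂ H)) : H)⟫ = 0 :=
      hzk _ _ (H₀.orthogonalProjectionOnto (A ⟨_, huA⟩)).2 (u' : (H₀ᗮ : Submodule ℂ H)).2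
    have h2 : ⟪((u : (H₀ᗮ : Submodule ℂ H)) : H),
        ((H₀.orthogonalProjectionOnto (A ⟨_, huA'⟩) : H₀) : H)⟫ = 0 :=
      hkz _ _ (u : (H₀ᗮ : Submodule ℂ H)).2 (H₀.orthogonalProjectionOnto (A ⟨_, huA'⟩)).2
    rw [inner_sub_left, inner_sub_right, h1, h2, hsym ⟨_, huA⟩ ⟨_, huA'⟩]
  set v₀ : H := (H₀.orthogonalProjectionOnto v : H) with hv₀def
  have hv₀H₀ : v₀ ∈ H₀ := (H₀.orthogonalProjectionOnto v).2
  have hv₀A : v₀ ∈ A.domain := hsub hv₀H₀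
  have hv₁mem : v - v₀ ∈ H₀ᗮ := Submodule.sub_starProjection_mem_orthogonal (K := H₀) v
  set a₀ : H := A ⟨v₀, hv₀A⟩ with ha₀
  have hmem : a₀ - (H₀.orthogonalProjectionOnto a₀ : H) ∈ H₀ᗮ :=
    Submodule.sub_starProjection_mem_orthogonal (K := H₀) a₀
  set wK : (H₀ᗮ : Submodule ℂ H) := ⟨v - v₀, hv₁mem⟩ with hwKdef
  set hK : (H₀ᗮ : Submodule ℂ H) :=
    -(⟨a₀ - (H₀.orthogonalProjectionOnto a₀ : H), hmem⟩ : (H₀ᗮ : Submodule ℂ H)) with hhKdef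
  have hkey : ∀ u : B.domain,
      ⟪B u + e • ((u : B.domain) : (H₀ᗮ : Submodule ℂ H)), wK⟫
        = ⟪(((u : B.domain) : (H₀ᗮ : Submodule ℂ H)) : (H₀ᗮ : Submodule ℂ H)), hK⟫ := by
    intro u
    have huA : ((u : (H₀ᗮ : Submodule ℂ H)) : H) ∈ A.domain := (hdom _).mp u.2
    rw [Submodule.coe_inner, Submodule.coe_inner]
    push_cast
    rw [hB u huA]
    have h1 := hv ⟨_, huA⟩
    have h2 : ⟪A ⟨((u : (H₀ᗮ : Submodule ℂ H)) : H), huA⟩, v₀⟫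
        = ⟪((u : (H₀ᗮ : Submodule ℂ H)) : H), a₀⟫ := hsym ⟨_, huA⟩ ⟨v₀, hv₀A⟩
    have z1 : ⟪((H₀.orthogonalProjectionOnto (A ⟨_, huA⟩) : H₀) : H), v - v₀⟫ = 0 :=
      hzk _ _ (H₀.orthogonalProjectionOnto (A ⟨_, huA⟩)).2 hv₁mem
    have z2 : ⟪((u : (H₀ᗮ : Submodule ℂ H)) : H), v₀⟫ = 0 :=
      hkz _ _ (u : (H₀ᗮ : Submodule ℂ H)).2 hv₀H₀
    have z3 : ⟪((u : (H₀ᗮ : Submodule ℂ H)) : H),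
        ((H₀.orthogonalProjectionOnto a₀ : H₀) : H)⟫ = 0 :=
      hkz _ _ (u : (H₀ᗮ : Submodule ℂ H)).2 (H₀.orthogonalProjectionOnto a₀).2
    rw [show ((hK : (H₀ᗮ : Submodule ℂ H)) : H)
      = -(a₀ - ((H₀.orthogonalProjectionOnto a₀ : H₀) : H)) from rfl]
    rw [show ((wK : (H₀ᗮ : Submodule ℂ H)) : H) = v - v₀ from rfl]
    simp only [inner_sub_left, inner_sub_right, inner_add_left, inner_smul_left,
      inner_neg_right, hce] at h1 z1 ⊢
    linear_combination h1 - z1 - h2 + e * z2 - z3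
  have hcore := core_lemma B hsymB e he hB1 hB2 wK hK hkey
  have hq : ⟪hK, wK⟫ = -(e * ⟪v₀, v₀⟫) + ⟪a₀, v₀⟫ := by
    rw [Submodule.coe_inner]
    rw [show ((hK : (H₀ᗮ : Submodule ℂ H)) : H)
      = -(a₀ - ((H₀.orthogonalProjectionOnto a₀ : H₀) : H)) from rfl,
      show ((wK : (H₀ᗮ : Submodule ℂ H)) : H) = v - v₀ from rfl]
    have z4 : ⟪((H₀.orthogonalProjectionOnto a₀ : H₀) : H), v - v₀⟫ = 0 :=
      hzk _ _ (H₀.orthogonalProjectionOnto a₀).2 hv₁mem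
    have z5 : ⟪v₀, v - v₀⟫ = 0 := hzk _ _ hv₀H₀ hv₁mem
    have h1 := hv ⟨v₀, hv₀A⟩
    simp only [inner_neg_left, inner_sub_left, inner_sub_right, inner_add_left,
      inner_smul_left, hce] at h1 z4 z5 ⊢
    linear_combination -h1 + z4 - e * z5
  have hr : (starRingEnd ℂ) ⟪a₀, v₀⟫ = ⟪a₀, v₀⟫ := by
    rw [inner_conj_symm]
    exact (hsym ⟨v₀, hv₀A⟩ ⟨v₀, hv₀A⟩).symm
  have hcc : (starRingEnd ℂ) ⟪hK, wK⟫ = e * ⟪v₀, v₀⟫ + ⟪a₀, v₀⟫ := by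
    rw [hq, map_add, map_neg, map_mul, hce, hr, inner_self_conj]
    ring
  rw [hcc, hq] at hcore
  have he0 : e ≠ 0 := by rcases he with rfl | rfl <;> simp [Complex.I_ne_zero]
  have h3 : e * (⟪v₀, v₀⟫ + ((‖wK‖ : ℂ)) ^ 2) * 2 = 0 := by linear_combination hcore
  have h4 : ⟪v₀, v₀⟫ + ((‖wK‖ : ℂ)) ^ 2 = 0 := by
    rcases mul_eq_zero.mp h3 with hh | hh
    · rcases mul_eq_zero.mp hh with hh' | hh'
      · exact absurd hh' he0
      · exact hh'
    · exact absurd hh two_ne_zero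
  have hwn : ‖wK‖ = ‖v - v₀‖ := rfl
  rw [inner_self_eq_norm_sq_to_K, hwn] at h4
  have h6 : ‖v₀‖ ^ 2 + ‖v - v₀‖ ^ 2 = 0 := by
    norm_num at h4
    exact_mod_cast h4
  have hv₀0 : v₀ = 0 := by
    have h8 : ‖v₀‖ ^ 2 = 0 := by
      have := sq_nonneg ‖v₀‖; have := sq_nonneg ‖v - v₀‖; linarith
    exact norm_eq_zero.mp (pow_eq_zero_iff two_ne_zero |>.mp h8)
  have hv₁0 : v - v₀ = 0 := by
    have h8 : ‖v - v₀‖ ^ 2 = 0 := by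
      have := sq_nonneg ‖v₀‖; have := sq_nonneg ‖v - v₀‖; linarith
    exact norm_eq_zero.mp (pow_eq_zero_iff two_ne_zero |>.mp h8)
  have hveq : v = (v - v₀) + v₀ := by abel
  rw [hveq, hv₁0, hv₀0, add_zero]

/-- Let `A` be symmetric densely defined on `H`, `H₀ ⊆ D(A)` finite dimensional,
`P` the orthogonal projection onto `H₀`, and `Ã = (I−P)A(I−P)` on `H₀ᗮ` with domain
`(I−P)D(A) = D(A) ∩ H₀ᗮ`. Then `Ã` is essentially self-adjoint iff `A` is. -/
theorem stmt_7 {H : Type*} [NormedAddCommGroup H] [InnerProductSpace ℂ H]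
    [CompleteSpace H]
    (A : H →ₗ.[ℂ] H) (hdense : Dense (A.domain : Set H)) (hsym : ∀ x y : A.domain, (inner ℂ (A x) ((y : A.domain) : H) : ℂ) = inner ℂ ((x : A.domain) : H) (A y))
    (H₀ : Submodule ℂ H) [FiniteDimensional ℂ H₀] (hsub : H₀ ≤ A.domain)
    (B : (H₀ᗮ : Submodule ℂ H) →ₗ.[ℂ] (H₀ᗮ : Submodule ℂ H))
    (hdom : ∀ u : H₀ᗮ, u ∈ B.domain ↔ (u : H) ∈ A.domain)
    (hB : ∀ (u : B.domain) (hu : ((u : H₀ᗮ) : H) ∈ A.domain),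
      ((B u : H₀ᗮ) : H) = A ⟨((u : H₀ᗮ) : H), hu⟩
        - (H₀.orthogonalProjectionOnto (A ⟨((u : H₀ᗮ) : H), hu⟩) : H)) :
    EssSelfAdjoint B ↔ EssSelfAdjoint A := by
  haveI : CompleteSpace (H₀ᗮ : Submodule ℂ H) :=
    (Submodule.isClosed_orthogonal H₀).completeSpace_coe
  constructor
  · rintro ⟨hb1, hb2⟩
    have hb1' : Dense (Set.range fun u : B.domain =>
        B u + (-Complex.I) • ((u : B.domain) : (H₀ᗮ : Submodule ℂ H))) := by
      have hfun : (fun u : B.domain =>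
          B u + (-Complex.I) • ((u : B.domain) : (H₀ᗮ : Submodule ℂ H)))
          = fun u : B.domain => B u - Complex.I • ((u : B.domain) : (H₀ᗮ : Submodule ℂ H)) := by
        funext u; rw [neg_smul, ← sub_eq_add_neg]
      rw [hfun]; exact hb2
    have hb2' : Dense (Set.range fun u : B.domain =>
        B u - (-Complex.I) • ((u : B.domain) : (H₀ᗮ : Submodule ℂ H))) := by
      have hfun : (fun u : B.domain =>
          B u - (-Complex.I) • ((u : B.domain) : (H₀ᗮ : Submodule ℂ H)))
          = fun u : B.domain => B u + Complex.I • ((u : B.domain) : (H₀ᗮ : Submodule ℂ H)) := by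
        funext u; rw [neg_smul, sub_neg_eq_add]
      rw [hfun]; exact hb1
    constructor
    · have h := dense_range_of_inner (A.toFun + Complex.I • A.domain.subtype) (fun v hv =>
        dirA A hsym H₀ hsub B hdom hB Complex.I (Or.inl rfl) hb1 hb2 v (fun x => by
          simpa [LinearPMap.toFun_eq_coe] using hv x))
      have hfun : (fun x : A.domain => (A.toFun + Complex.I • A.domain.subtype) x)
          = fun x : A.domain => A x + Complex.I • (x : H) := by
        funext x; simp [LinearPMap.toFun_eq_coe]
      rwa [hfun] at h
    · have h := dense_range_of_inner (A.toFun + (-Complex.I) • A.domain.subtype) (fun v hv =>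
        dirA A hsym H₀ hsub B hdom hB (-Complex.I) (Or.inr rfl) hb1' hb2' v (fun x => by
          simpa [LinearPMap.toFun_eq_coe] using hv x))
      have hfun : (fun x : A.domain => (A.toFun + (-Complex.I) • A.domain.subtype) x)
          = fun x : A.domain => A x - Complex.I • (x : H) := by
        funext x
        simp [LinearPMap.toFun_eq_coe, neg_smul, sub_eq_add_neg]
      rwa [hfun] at h
  · rintro ⟨ha1, ha2⟩
    have ha1' : Dense (Set.range fun x : A.domain => A x + (-Complex.I) • (x : H)) := by
      have hfun : (fun x : A.domain => A x + (-Complex.I) • (x : H))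
          = fun x : A.domain => A x - Complex.I • (x : H) := by
        funext x; rw [neg_smul, ← sub_eq_add_neg]
      rw [hfun]; exact ha2
    have ha2' : Dense (Set.range fun x : A.domain => A x - (-Complex.I) • (x : H)) := by
      have hfun : (fun x : A.domain => A x - (-Complex.I) • (x : H))
          = fun x : A.domain => A x + Complex.I • (x : H) := by
        funext x; rw [neg_smul, sub_neg_eq_add]
      rw [hfun]; exact ha1
    constructor
    · have h := dense_range_of_inner (B.toFun + Complex.I • B.domain.subtype) (fun w hw =>
        dirB A hsym H₀ hsub B hdom hB Complex.I (Or.inl rfl) ha1 ha2 w (fun u => by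
          simpa [LinearPMap.toFun_eq_coe] using hw u))
      have hfun : (fun u : B.domain => (B.toFun + Complex.I • B.domain.subtype) u)
          = fun u : B.domain => B u + Complex.I • ((u : B.domain) : (H₀ᗮ : Submodule ℂ H)) := by
        funext u; simp [LinearPMap.toFun_eq_coe]
      rwa [hfun] at h
    · have h := dense_range_of_inner (B.toFun + (-Complex.I) • B.domain.subtype) (fun w hw =>
        dirB A hsym H₀ hsub B hdom hB (-Complex.I) (Or.inr rfl) ha1' ha2' w (fun u => by
          simpa [LinearPMap.toFun_eq_coe] using hw u))
      have hfun : (fun u : B.domain => (B.toFun + (-Complex.I) • B.domain.subtype) u)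
          = fun u : B.domain => B u - Complex.I • ((u : B.domain) : (H₀ᗮ : Submodule ℂ H)) := by
        funext u
        simp [LinearPMap.toFun_eq_coe, neg_smul, sub_eq_add_neg]
      rwa [hfun] at h
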